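/- arXiv:1510.08765 — 3 statements merged into one kernel-verified Lean document; each statement's English description precedes it below -/
import Mathlib

section
/- For all real l and λ > 0, the integral ∫₀^∞ (1/√(2πv))·exp(−l²/(2v))·(λ²/2)·exp(−λ²v/2) dv equals (λ/2)·exp(−λ|l|). -/
open MeasureTheory Real Set

section aux

variable {c d : ℝ}

lemma deriv_phi (hc : 0 < c) (hd : 0 < d) :
    ∀ u ∈ Ioi (0:ℝ), HasDerivWithinAt (fun u => c * u - d / u) (c + d / u ^ 2) (Ioi 0) u := by
  intro u hu
  have hu0 : u ≠ 0 := ne_of_gt hu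
  have h1 : HasDerivAt (fun u : ℝ => c * u - d / u) (c - d * (-(u^2)⁻¹)) u := by
    have := ((hasDerivAt_id u).const_mul c).sub (((hasDerivAt_inv hu0).const_mul d))
    refine (this.congr_of_eventuallyEq (Filter.Eventually.of_forall fun x => ?_)).congr_deriv ?_
    · simp [div_eq_mul_inv]
    · ring
  exact h1.hasDerivWithinAt.congr_deriv (by ring)

lemma phi_injOn (hc : 0 < c) (hd : 0 < d) :
    InjOn (fun u => c * u - d / u) (Ioi (0:ℝ)) := by
  have : StrictMonoOn (fun u => c * u - d / u) (Ioi (0:ℝ)) := by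
    intro a ha b hb hab
    have ha0 : (0:ℝ) < a := ha
    have hb0 : (0:ℝ) < b := hb
    have h1 : c * a < c * b := by nlinarith
    have h2 : d / b < d / a := div_lt_div_of_pos_left hd ha0 hab
    simp only
    linarith
  exact this.injOn

lemma phi_image (hc : 0 < c) (hd : 0 < d) :
    (fun u => c * u - d / u) '' (Ioi (0:ℝ)) = univ := by
  apply eq_univ_of_forall
  intro t
  set u := (t + Real.sqrt (t^2 + 4*c*d)) / (2*c) with hu
  have hs : Real.sqrt (t^2 + 4*c*d) > |t| := by
    have : |t| = Real.sqrt (t^2) := by rw [Real.sqrt_sq_eq_abs]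
    rw [this]
    apply Real.sqrt_lt_sqrt (sq_nonneg t)
    nlinarith
  have hupos : 0 < u := by
    have : -t ≤ |t| := neg_le_abs t
    have : 0 < t + Real.sqrt (t^2 + 4*c*d) := by linarith
    positivity
  refine ⟨u, hupos, ?_⟩
  have hsq : Real.sqrt (t^2 + 4*c*d) ^ 2 = t^2 + 4*c*d := by
    apply Real.sq_sqrt; nlinarith
  have key : c * u ^ 2 - t * u - d = 0 := by
    have h2c : (2*c) ≠ 0 := by positivity
    have h2u : 2*c*u = t + Real.sqrt (t^2 + 4*c*d) := by rw [hu]; field_simp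
    have h4 : 4*c*(c * u ^ 2 - t * u - d) = 0 := by
      linear_combination (2*c*u - t + Real.sqrt (t^2 + 4*c*d)) * h2u + hsq
    rcases mul_eq_zero.mp h4 with h | h
    · exact absurd h (by positivity)
    · exact h
  have hu0 : u ≠ 0 := ne_of_gt hupos
  field_simp
  nlinarith [key]

lemma psi_image (hc : 0 < c) (hd : 0 < d) :
    (fun u : ℝ => (d/c) / u) '' (Ioi (0:ℝ)) = Ioi (0:ℝ) := by
  ext t
  constructor
  · rintro ⟨u, hu, rfl⟩
    exact div_pos (div_pos hd hc) hu
  · intro ht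
    refine ⟨(d/c)/t, div_pos (div_pos hd hc) ht, ?_⟩
    have ht0 : (t:ℝ) ≠ 0 := ne_of_gt ht
    have hdc : d / c ≠ 0 := by positivity
    field_simp

lemma psi_deriv (hc : 0 < c) (hd : 0 < d) :
    ∀ u ∈ Ioi (0:ℝ),
      HasDerivWithinAt (fun u : ℝ => (d/c) / u) (-((d/c) / u ^ 2)) (Ioi 0) u := by
  intro u hu
  have hu0 : u ≠ 0 := ne_of_gt hu
  have := (hasDerivAt_inv hu0).const_mul (d/c)
  refine ((this.congr_of_eventuallyEq
    (Filter.Eventually.of_forall fun x => ?_)).congr_deriv ?_).hasDerivWithinAt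
  · simp [div_eq_mul_inv]
  · ring

lemma psi_injOn (hc : 0 < c) (hd : 0 < d) :
    InjOn (fun u : ℝ => (d/c) / u) (Ioi (0:ℝ)) := by
  intro a ha b hb hab
  simp only [div_eq_mul_inv] at hab
  have h2 : a⁻¹ = b⁻¹ := mul_left_cancel₀ (by positivity : d * c⁻¹ ≠ 0) hab
  exact inv_injective h2

lemma psi_comp (hc : 0 < c) (hd : 0 < d) {u : ℝ} (hu : 0 < u) :
    Real.exp (-(c * ((d/c)/u) - d / ((d/c)/u)) ^ 2) = Real.exp (-(c * u - d / u) ^ 2) := by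
  have : c * ((d/c)/u) - d / ((d/c)/u) = -(c * u - d / u) := by
    have hu0 : u ≠ 0 := ne_of_gt hu
    field_simp
    ring
  rw [this, neg_sq]

lemma integrable_e (hc : 0 < c) (d : ℝ) :
    IntegrableOn (fun u => Real.exp (-(c * u - d / u) ^ 2)) (Ioi (0:ℝ)) := by
  have hmeas : AEStronglyMeasurable (fun u => Real.exp (-(c * u - d / u) ^ 2))
      (volume.restrict (Ioi (0:ℝ))) := by
    apply ContinuousOn.aestronglyMeasurable _ measurableSet_Ioi
    apply Real.continuous_exp.comp_continuousOn
    apply ContinuousOn.neg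
    apply ContinuousOn.pow
    exact (continuousOn_const.mul continuousOn_id).sub
      (continuousOn_const.div continuousOn_id fun x hx => ne_of_gt hx)
  have hbound : IntegrableOn (fun u : ℝ => Real.exp (2*c*d) * Real.exp (-(c^2) * u ^ 2))
      (Ioi (0:ℝ)) := by
    exact ((integrable_exp_neg_mul_sq (by positivity : (0:ℝ) < c^2)).const_mul _).integrableOn
  refine hbound.mono' hmeas ?_
  filter_upwards [ae_restrict_mem measurableSet_Ioi] with u hu
  have hu0 : (0:ℝ) < u := hu
  rw [Real.norm_eq_abs, abs_of_pos (Real.exp_pos _), ← Real.exp_add]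
  apply Real.exp_le_exp.2
  have h : (c * u - d / u) ^ 2 = c^2 * u^2 - 2*c*d + (d/u)^2 := by
    field_simp; ring
  nlinarith [sq_nonneg (d/u)]

lemma integral_e (hc : 0 < c) (hd : 0 ≤ d) :
    ∫ u in Ioi (0:ℝ), Real.exp (-(c * u - d / u) ^ 2) = Real.sqrt π / (2 * c) := by
  rcases eq_or_lt_of_le hd with hd0 | hd
  · subst hd0
    have h : ∀ u : ℝ, Real.exp (-(c * u - 0 / u) ^ 2) = Real.exp (-(c^2) * u ^ 2) := by
      intro u; ring_nf
    rw [funext h, integral_gaussian_Ioi]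
    have h1 : Real.sqrt (π / c ^ 2) = Real.sqrt π / c := by
      rw [Real.sqrt_div Real.pi_pos.le, Real.sqrt_sq hc.le]
    rw [h1]
    ring
  · -- d > 0
    set e : ℝ → ℝ := fun u => Real.exp (-(c * u - d / u) ^ 2) with he
    set J := ∫ u in Ioi (0:ℝ), e u with hJ
    -- first substitution : t = c u - d / u
    have step1 : Real.sqrt π = ∫ u in Ioi (0:ℝ), (c + d / u ^ 2) * e u := by
      have h0 : Real.sqrt π = ∫ t : ℝ, Real.exp (-t ^ 2) := by
        have := integral_gaussian 1
        simp only [neg_mul, one_mul] at this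
        rw [this, div_one]
      rw [h0, ← setIntegral_univ, ← phi_image hc hd,
        integral_image_eq_integral_abs_deriv_smul measurableSet_Ioi (deriv_phi hc hd)
          (phi_injOn hc hd)]
      apply setIntegral_congr_fun measurableSet_Ioi
      intro u hu
      have hu0 : (0:ℝ) < u := hu
      simp only [smul_eq_mul]
      rw [abs_of_pos (by positivity)]
    -- second substitution : w = (d/c) / u
    have step2 : J = ∫ u in Ioi (0:ℝ), (d / (c * u ^ 2)) * e u := by
      have h := integral_image_eq_integral_abs_deriv_smul measurableSet_Ioi
        (psi_deriv hc hd) (psi_injOn hc hd) e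
      rw [psi_image hc hd] at h
      rw [hJ, h]
      apply setIntegral_congr_fun measurableSet_Ioi
      intro u hu
      have hu0 : (0:ℝ) < u := hu
      simp only [smul_eq_mul, abs_neg]
      rw [abs_of_pos (by positivity), he]
      simp only
      rw [psi_comp hc hd hu0, div_div]
    -- integrability
    have hI1 : IntegrableOn (fun u : ℝ => c * e u) (Ioi (0:ℝ)) :=
      (integrable_e hc d).const_mul c
    have hI2 : IntegrableOn (fun u : ℝ => (d / (c * u ^ 2)) * e u) (Ioi (0:ℝ)) := by
      have hiff := integrableOn_image_iff_integrableOn_abs_deriv_smul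
        measurableSet_Ioi (psi_deriv hc hd) (psi_injOn hc hd) e
      rw [psi_image hc hd] at hiff
      have h2 := hiff.mp (integrable_e hc d)
      apply h2.congr_fun _ measurableSet_Ioi
      intro u hu
      have hu0 : (0:ℝ) < u := hu
      simp only [smul_eq_mul, abs_neg]
      rw [abs_of_pos (by positivity), he]
      simp only
      rw [psi_comp hc hd hu0, div_div]
    have step3 : Real.sqrt π = c * J + c * J := by
      rw [step1]
      have h : ∀ u ∈ Ioi (0:ℝ), (c + d / u ^ 2) * e u
          = c * e u + (d / (c * u ^ 2)) * e u * c := by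
        intro u hu
        have hu0 : (0:ℝ) < u := hu
        field_simp
      rw [setIntegral_congr_fun measurableSet_Ioi h]
      rw [integral_add hI1 (hI2.mul_const c)]
      rw [integral_mul_const, integral_const_mul, ← step2, hJ]
      ring
    have h4 : Real.sqrt π = 2 * c * J := by rw [step3]; ring
    rw [hJ] at h4 ⊢
    field_simp at h4 ⊢
    linarith

end aux

theorem stmt_2 (lam l : ℝ) (hlam : 0 < lam) :
    ∫ v in Set.Ioi (0 : ℝ),
        (1 / Real.sqrt (2 * Real.pi * v)) * Real.exp (-l ^ 2 / (2 * v)) *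
          (lam ^ 2 / 2) * Real.exp (-lam ^ 2 * v / 2) =
      (lam / 2) * Real.exp (-lam * |l|) := by
  set c : ℝ := lam / Real.sqrt 2 with hc
  set d : ℝ := |l| / Real.sqrt 2 with hd
  have h2 : (0:ℝ) < Real.sqrt 2 := Real.sqrt_pos.2 (by norm_num)
  have hs2 : Real.sqrt 2 ^ 2 = 2 := Real.sq_sqrt (by norm_num)
  have habs : |l| ^ 2 = l ^ 2 := sq_abs l
  have hcpos : 0 < c := div_pos hlam h2
  have hdpos : 0 ≤ d := div_nonneg (abs_nonneg l) h2.le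
  have e1 : c ^ 2 = lam ^ 2 / 2 := by rw [hc, div_pow, hs2]
  have e2 : d ^ 2 = l ^ 2 / 2 := by rw [hd, div_pow, hs2, habs]
  have e3 : c * d = lam * |l| / 2 := by
    rw [hc, hd, div_mul_div_comm, Real.mul_self_sqrt (by norm_num : (0:ℝ) ≤ 2)]
  -- substitution v = u^2
  have himg : (fun u : ℝ => u ^ 2) '' (Ioi (0:ℝ)) = Ioi (0:ℝ) := by
    ext t
    constructor
    · rintro ⟨u, hu, rfl⟩; exact pow_pos (show (0:ℝ) < u from hu) 2
    · intro ht
      exact ⟨Real.sqrt t, Real.sqrt_pos.2 ht, Real.sq_sqrt ht.le⟩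
  have hderiv : ∀ u ∈ Ioi (0:ℝ),
      HasDerivWithinAt (fun u : ℝ => u ^ 2) (2 * u) (Ioi 0) u := by
    intro u hu
    simpa [mul_comm] using (hasDerivAt_pow 2 u).hasDerivWithinAt
  have hinj : InjOn (fun u : ℝ => u ^ 2) (Ioi (0:ℝ)) := by
    intro a ha b hb hab
    simp only at hab
    nlinarith [lt_trichotomy a b, (show (0:ℝ) < a from ha), (show (0:ℝ) < b from hb)]
  set g : ℝ → ℝ := fun v =>
    (1 / Real.sqrt (2 * Real.pi * v)) * Real.exp (-l ^ 2 / (2 * v)) *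
      (lam ^ 2 / 2) * Real.exp (-lam ^ 2 * v / 2) with hg
  have sub1 : (∫ v in Ioi (0:ℝ), g v) = ∫ u in Ioi (0:ℝ), |2 * u| • g (u ^ 2) := by
    conv_lhs => rw [← himg]
    exact integral_image_eq_integral_abs_deriv_smul measurableSet_Ioi hderiv hinj g
  have key : ∀ u ∈ Ioi (0:ℝ), |2 * u| • g (u ^ 2)
      = (lam ^ 2 / Real.sqrt (2 * Real.pi)) * Real.exp (-lam * |l|) *
          Real.exp (-(c * u - d / u) ^ 2) := by
    intro u hu
    have hu0 : (0:ℝ) < u := hu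
    have hsqrt : Real.sqrt (2 * Real.pi * u ^ 2) = Real.sqrt (2 * Real.pi) * u := by
      rw [Real.sqrt_mul (by positivity), Real.sqrt_sq hu0.le]
    have expand : (c * u - d / u) ^ 2 = c^2 * u^2 - 2*(c*d) + d^2 / u^2 := by
      field_simp
      ring
    have hexp : (-l ^ 2 / (2 * u ^ 2)) + (-lam ^ 2 * u ^ 2 / 2)
        = (-lam * |l|) + (-(c * u - d / u) ^ 2) := by
      rw [expand, e1, e2, e3]
      field_simp
      ring
    rw [smul_eq_mul, abs_of_pos (by positivity)]
    simp only [hg]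
    rw [hsqrt]
    rw [show (1 / (Real.sqrt (2*Real.pi) * u)) * Real.exp (-l ^ 2 / (2 * u ^ 2)) *
          (lam ^ 2 / 2) * Real.exp (-lam ^ 2 * u ^ 2 / 2)
        = (lam ^ 2 / (2 * Real.sqrt (2*Real.pi) * u)) *
            (Real.exp (-l ^ 2 / (2 * u ^ 2)) * Real.exp (-lam ^ 2 * u ^ 2 / 2)) by ring]
    rw [← Real.exp_add, hexp, Real.exp_add]
    have hP : (0:ℝ) < Real.sqrt (2 * Real.pi) := Real.sqrt_pos.2 (by positivity)
    field_simp
  rw [sub1, setIntegral_congr_fun measurableSet_Ioi key, integral_const_mul,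
    integral_e hcpos hdpos]
  have h2pi : Real.sqrt (2 * Real.pi) = Real.sqrt 2 * Real.sqrt π :=
    Real.sqrt_mul (by norm_num) _
  have hpi : (0:ℝ) < Real.sqrt π := Real.sqrt_pos.2 Real.pi_pos
  have hcoef : Real.sqrt π / (2 * c) = Real.sqrt 2 * Real.sqrt π / (2 * lam) := by
    rw [hc]
    field_simp
  rw [h2pi, hcoef]
  field_simp
end

section
/- If Z₁, Z₂, Z₃, Z₄ are independent standard normal random variables, then the determinant Z₁Z₃ − Z₂Z₄ of a 2×2 matrix with these entries has the standard Laplace distribution with density (1/2)e^{−|x|}. -/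
open MeasureTheory ProbabilityTheory Real Set
open scoped ENNReal NNReal

namespace StdLaplaceAux

noncomputable def gpdf : ℝ → ℝ≥0∞ := gaussianPDF 0 1

lemma gpdf_meas : Measurable gpdf := measurable_gaussianPDF 0 1

lemma P_eq : gaussianReal 0 1 = (volume : Measure ℝ).withDensity gpdf :=
  gaussianReal_of_var_ne_zero 0 one_ne_zero

/-- product of withDensity measures -/
lemma prod_withDensity {α β : Type*} [MeasurableSpace α] [MeasurableSpace β]
    (μ : Measure α) (ν : Measure β) [SigmaFinite μ] [SigmaFinite ν]
    {f : α → ℝ≥0∞} {g : β → ℝ≥0∞} (hf : Measurable f) (hg : Measurable g)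
    [SigmaFinite (μ.withDensity f)] [SigmaFinite (ν.withDensity g)] :
    (μ.withDensity f).prod (ν.withDensity g)
      = (μ.prod ν).withDensity (fun p => f p.1 * g p.2) := by
  refine Measure.prod_eq fun s t hs ht => ?_
  rw [withDensity_apply _ (hs.prod ht), ← Measure.prod_restrict,
    lintegral_prod_mul hf.aemeasurable hg.aemeasurable,
    withDensity_apply _ hs, withDensity_apply _ ht]

end StdLaplaceAux
namespace StdLaplaceAux

instance : SigmaFinite ((volume : Measure ℝ).withDensity gpdf) := by
  rw [← P_eq]; infer_instance

noncomputable def P : Measure ℝ := gaussianReal 0 1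

noncomputable def G2 : Measure (ℝ × ℝ) := P.prod P

lemma G2_eq : G2 = (volume : Measure (ℝ × ℝ)).withDensity (fun p => gpdf p.1 * gpdf p.2) := by
  rw [G2, P, P_eq, prod_withDensity _ _ gpdf_meas gpdf_meas, ← Measure.volume_eq_prod]

instance : IsProbabilityMeasure P := by rw [P]; infer_instance
instance : IsProbabilityMeasure G2 := by rw [G2]; infer_instance

instance : SigmaFinite G2 := inferInstance

noncomputable def Q : Measure ((ℝ × ℝ) × (ℝ × ℝ)) := G2.prod G2

lemma gpdf2_meas : Measurable fun p : ℝ × ℝ => gpdf p.1 * gpdf p.2 :=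
  (gpdf_meas.comp measurable_fst).mul (gpdf_meas.comp measurable_snd)

noncomputable def ρ4 : (ℝ × ℝ) × (ℝ × ℝ) → ℝ≥0∞ :=
  fun x => (gpdf x.1.1 * gpdf x.1.2) * (gpdf x.2.1 * gpdf x.2.2)

lemma ρ4_meas : Measurable ρ4 :=
  (gpdf2_meas.comp measurable_fst).mul (gpdf2_meas.comp measurable_snd)

instance : SigmaFinite ((volume : Measure (ℝ × ℝ)).withDensity fun p => gpdf p.1 * gpdf p.2) := by
  rw [← G2_eq]; infer_instance

lemma Q_eq : Q = (volume : Measure ((ℝ × ℝ) × (ℝ × ℝ))).withDensity ρ4 := by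
  rw [Q, G2_eq, prod_withDensity _ _ gpdf2_meas gpdf2_meas, ← Measure.volume_eq_prod]
  rfl

end StdLaplaceAux
namespace StdLaplaceAux

noncomputable def R : ℝ × ℝ → ℝ × ℝ := fun p => ((p.1 + p.2) / Real.sqrt 2, (p.1 - p.2) / Real.sqrt 2)
noncomputable def R' : ℝ × ℝ → ℝ × ℝ := fun p => ((p.1 - p.2) / Real.sqrt 2, (p.1 + p.2) / Real.sqrt 2)

lemma R_meas : Measurable R := by unfold R; fun_prop
lemma R'_meas : Measurable R' := by unfold R'; fun_prop

lemma map_R_volume : MeasurePreserving R (volume : Measure (ℝ × ℝ)) volume := by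
  have h2 : Real.sqrt 2 ≠ 0 := by positivity
  have hR : R = ⇑(Matrix.toLin (Module.Basis.finTwoProd ℝ) (Module.Basis.finTwoProd ℝ)
      !![(Real.sqrt 2)⁻¹, (Real.sqrt 2)⁻¹; (Real.sqrt 2)⁻¹, -(Real.sqrt 2)⁻¹]) := by
    funext p
    rw [Matrix.toLin_finTwoProd_apply]
    simp only [R, Prod.mk.injEq]
    constructor <;> · field_simp; try ring
  have hdet : LinearMap.det (Matrix.toLin (Module.Basis.finTwoProd ℝ) (Module.Basis.finTwoProd ℝ)
      !![(Real.sqrt 2)⁻¹, (Real.sqrt 2)⁻¹; (Real.sqrt 2)⁻¹, -(Real.sqrt 2)⁻¹]) = -1 := by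
    rw [LinearMap.det_toLin, Matrix.det_fin_two_of]
    have : (Real.sqrt 2) * Real.sqrt 2 = 2 := Real.mul_self_sqrt (by norm_num)
    field_simp
    try linarith
  constructor
  · rw [hR]; exact (Matrix.toLin _ _ _).continuous_of_finiteDimensional.measurable
  · rw [hR, Measure.map_linearMap_addHaar_eq_smul_addHaar _ (by rw [hdet]; norm_num), hdet]
    norm_num

lemma map_R'_volume : MeasurePreserving R' (volume : Measure (ℝ × ℝ)) volume := by
  have h2 : Real.sqrt 2 ≠ 0 := by positivity
  have hR : R' = ⇑(Matrix.toLin (Module.Basis.finTwoProd ℝ) (Module.Basis.finTwoProd ℝ)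
      !![(Real.sqrt 2)⁻¹, -(Real.sqrt 2)⁻¹; (Real.sqrt 2)⁻¹, (Real.sqrt 2)⁻¹]) := by
    funext p
    rw [Matrix.toLin_finTwoProd_apply]
    simp only [R', Prod.mk.injEq]
    constructor <;> · field_simp; try ring
  have hdet : LinearMap.det (Matrix.toLin (Module.Basis.finTwoProd ℝ) (Module.Basis.finTwoProd ℝ)
      !![(Real.sqrt 2)⁻¹, -(Real.sqrt 2)⁻¹; (Real.sqrt 2)⁻¹, (Real.sqrt 2)⁻¹]) = 1 := by
    rw [LinearMap.det_toLin, Matrix.det_fin_two_of]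
    have : (Real.sqrt 2) * Real.sqrt 2 = 2 := Real.mul_self_sqrt (by norm_num)
    field_simp
    try linarith
  constructor
  · rw [hR]; exact (Matrix.toLin _ _ _).continuous_of_finiteDimensional.measurable
  · rw [hR, Measure.map_linearMap_addHaar_eq_smul_addHaar _ (by rw [hdet]; norm_num), hdet]
    norm_num

/-- transpose map -/
def tmap : (ℝ × ℝ) × (ℝ × ℝ) → (ℝ × ℝ) × (ℝ × ℝ) := fun x => ((x.1.1, x.2.1), (x.1.2, x.2.2))

lemma tmap_meas : Measurable tmap := by unfold tmap; fun_prop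

lemma map_tmap_volume : MeasurePreserving tmap (volume : Measure ((ℝ × ℝ) × (ℝ × ℝ))) volume := by
  have h1 : MeasurePreserving (MeasurableEquiv.prodAssoc : (ℝ × ℝ) × (ℝ × ℝ) ≃ᵐ ℝ × (ℝ × (ℝ × ℝ)))
      volume volume := measurePreserving_prodAssoc (volume : Measure ℝ) volume volume
  have h2 : MeasurePreserving
      (Prod.map (id : ℝ → ℝ) (MeasurableEquiv.prodAssoc : (ℝ × ℝ) × ℝ ≃ᵐ ℝ × (ℝ × ℝ)).symm)
      volume volume :=
    (MeasurePreserving.id _).prod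
      ((measurePreserving_prodAssoc (volume : Measure ℝ) volume volume).symm _)
  have h3 : MeasurePreserving
      (Prod.map (id : ℝ → ℝ) (Prod.map (Prod.swap : ℝ × ℝ → ℝ × ℝ) (id : ℝ → ℝ)))
      volume volume :=
    (MeasurePreserving.id _).prod (Measure.measurePreserving_swap.prod (MeasurePreserving.id _))
  have h4 : MeasurePreserving
      (Prod.map (id : ℝ → ℝ) (MeasurableEquiv.prodAssoc : (ℝ × ℝ) × ℝ ≃ᵐ ℝ × (ℝ × ℝ)))
      volume volume :=
    (MeasurePreserving.id _).prod (measurePreserving_prodAssoc (volume : Measure ℝ) volume volume)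
  have h5 : MeasurePreserving
      (MeasurableEquiv.prodAssoc : (ℝ × ℝ) × (ℝ × ℝ) ≃ᵐ ℝ × (ℝ × (ℝ × ℝ))).symm
      volume volume := (measurePreserving_prodAssoc (volume : Measure ℝ) volume volume).symm _
  have H := (((h5.comp h4).comp h3).comp h2).comp h1
  exact H

end StdLaplaceAux
namespace StdLaplaceAux

noncomputable def Φ : (ℝ × ℝ) × (ℝ × ℝ) → (ℝ × ℝ) × (ℝ × ℝ) := fun x => tmap (R x.1, R' x.2)

lemma Φ_meas : Measurable Φ :=
  tmap_meas.comp ((R_meas.comp measurable_fst).prodMk (R'_meas.comp measurable_snd))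

lemma map_Φ_volume : MeasurePreserving Φ (volume : Measure ((ℝ × ℝ) × (ℝ × ℝ))) volume := by
  have h : MeasurePreserving (Prod.map R R') (volume : Measure ((ℝ × ℝ) × (ℝ × ℝ))) volume :=
    map_R_volume.prod map_R'_volume
  exact map_tmap_volume.comp h

lemma gpdfReal_eq (a : ℝ) :
    gaussianPDFReal 0 1 a = (Real.sqrt (2 * π))⁻¹ * Real.exp (-(a ^ 2) / 2) := by
  simp [gaussianPDFReal]

lemma gpdf_mul (a b : ℝ) :
    gpdf a * gpdf b = ENNReal.ofReal ((2 * π)⁻¹ * Real.exp (-(a ^ 2 + b ^ 2) / 2)) := by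
  have h1 : (0:ℝ) ≤ gaussianPDFReal 0 1 a := gaussianPDFReal_nonneg _ _ _
  rw [gpdf, gaussianPDF, gaussianPDF, ← ENNReal.ofReal_mul h1, gpdfReal_eq, gpdfReal_eq]
  congr 1
  have hs : Real.sqrt (2 * π) * Real.sqrt (2 * π) = 2 * π :=
    Real.mul_self_sqrt (by positivity)
  have : (Real.sqrt (2 * π))⁻¹ * (Real.sqrt (2 * π))⁻¹ = (2 * π)⁻¹ := by
    rw [← mul_inv, hs]
  rw [mul_mul_mul_comm, this, ← Real.exp_add]
  congr 1
  ring

lemma ρ4_eq (x : (ℝ × ℝ) × (ℝ × ℝ)) :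
    ρ4 x = ENNReal.ofReal ((2 * π)⁻¹ * (2 * π)⁻¹ *
      Real.exp (-(x.1.1 ^ 2 + x.1.2 ^ 2 + x.2.1 ^ 2 + x.2.2 ^ 2) / 2)) := by
  rw [ρ4, gpdf_mul, gpdf_mul, ← ENNReal.ofReal_mul (by positivity)]
  congr 1
  rw [mul_mul_mul_comm, ← Real.exp_add]
  ring_nf

lemma ρ4_Φ (x : (ℝ × ℝ) × (ℝ × ℝ)) : ρ4 (Φ x) = ρ4 x := by
  obtain ⟨⟨a, b⟩, c, d⟩ := x
  rw [ρ4_eq, ρ4_eq]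
  have h2 : Real.sqrt 2 ^ 2 = 2 := Real.sq_sqrt (by norm_num)
  have h2' : Real.sqrt 2 ≠ 0 := by positivity
  congr 2
  simp only [Φ, tmap, R, R']
  field_simp
  ring_nf
  rw [inv_pow, h2]
  ring_nf

lemma map_Φ_Q : Measure.map Φ Q = Q := by
  ext A hA
  rw [Measure.map_apply Φ_meas hA, Q_eq, withDensity_apply _ (Φ_meas hA), withDensity_apply _ hA,
    ← lintegral_indicator (Φ_meas hA), ← lintegral_indicator hA]
  have : ∀ x, (Φ ⁻¹' A).indicator ρ4 x = (A.indicator ρ4) (Φ x) := by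
    intro x
    by_cases h : Φ x ∈ A <;> simp [Set.indicator_apply, h, Set.mem_preimage, ρ4_Φ]
  rw [lintegral_congr this, ← lintegral_map (ρ4_meas.indicator hA) Φ_meas,
    map_Φ_volume.map_eq]

end StdLaplaceAux
namespace StdLaplaceAux

noncomputable def expd : ℝ → ℝ≥0∞ :=
  Set.indicator (Ici 0) (fun t => ENNReal.ofReal (rexp (-t)))

lemma expd_meas : Measurable expd :=
  Measurable.indicator (by fun_prop) measurableSet_Ici

noncomputable def sq2 : ℝ × ℝ → ℝ := fun p => (p.1 ^ 2 + p.2 ^ 2) / 2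

lemma sq2_meas : Measurable sq2 := by unfold sq2; fun_prop

lemma Ir {x : ℝ} (hx : 0 ≤ x) :
    ∫ r in Ioc 0 (Real.sqrt (2 * x)), r * rexp (-r ^ 2 / 2) = 1 - rexp (-x) := by
  rw [← intervalIntegral.integral_of_le (Real.sqrt_nonneg _)]
  have hFTC : ∀ r : ℝ, HasDerivAt (fun r : ℝ => -rexp (-r ^ 2 / 2)) (r * rexp (-r ^ 2 / 2)) r := by
    intro r
    have h1 : HasDerivAt (fun r : ℝ => -r ^ 2 / 2) (-r) r := by
      exact ((hasDerivAt_pow 2 r).neg.div_const 2).congr_deriv (by norm_num; ring)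
    have h2 := (h1.exp).neg
    exact h2.congr_deriv (by ring)
  rw [intervalIntegral.integral_eq_sub_of_hasDerivAt (fun r _ => hFTC r)
    (Continuous.intervalIntegrable (by continuity) _ _)]
  rw [Real.sq_sqrt (by linarith : (0:ℝ) ≤ 2 * x)]
  norm_num
  rw [show -(2 * x) / 2 = -x by ring]
  ring

lemma ρ2r_integrable : Integrable (fun p : ℝ × ℝ => (2 * π)⁻¹ * rexp (-(p.1 ^ 2 + p.2 ^ 2) / 2)) := by
  have h : (fun p : ℝ × ℝ => (2 * π)⁻¹ * rexp (-(p.1 ^ 2 + p.2 ^ 2) / 2))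
      = fun p : ℝ × ℝ => ((2 * π)⁻¹ * rexp (-(1/2) * p.1 ^ 2)) * rexp (-(1/2) * p.2 ^ 2) := by
    funext p
    rw [mul_assoc, ← Real.exp_add]
    ring_nf
  rw [h, Measure.volume_eq_prod]
  exact Integrable.mul_prod ((integrable_exp_neg_mul_sq (by norm_num)).const_mul _)
    (integrable_exp_neg_mul_sq (by norm_num))

lemma G2_disk {x : ℝ} (hx : 0 ≤ x) :
    G2 (sq2 ⁻¹' Iic x) = ENNReal.ofReal (1 - rexp (-x)) := by
  have hD : MeasurableSet (sq2 ⁻¹' Iic x) := sq2_meas measurableSet_Iic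
  have hρ : ∀ p : ℝ × ℝ, gpdf p.1 * gpdf p.2
      = ENNReal.ofReal ((2 * π)⁻¹ * rexp (-(p.1 ^ 2 + p.2 ^ 2) / 2)) := fun p => gpdf_mul _ _
  rw [G2_eq, withDensity_apply _ hD]
  rw [setLIntegral_congr_fun hD (fun p _ => hρ p)]
  rw [← ofReal_integral_eq_lintegral_ofReal (ρ2r_integrable.restrict)
    (Filter.Eventually.of_forall fun p => by positivity)]
  congr 1
  rw [← MeasureTheory.integral_indicator hD]
  rw [← integral_comp_polarCoord_symm]
  set s := Real.sqrt (2 * x) with hs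
  have hcongr : ∀ p ∈ polarCoord.target,
      p.1 • ((sq2 ⁻¹' Iic x).indicator
          (fun p : ℝ × ℝ => (2 * π)⁻¹ * rexp (-(p.1 ^ 2 + p.2 ^ 2) / 2)) (polarCoord.symm p))
      = (Ioc 0 s).indicator (fun r => r * rexp (-r ^ 2 / 2)) p.1 * (2 * π)⁻¹ := by
    rintro ⟨r, θ⟩ ⟨hr, hθ⟩
    simp only [mem_Ioi] at hr
    have hsymm : polarCoord.symm (r, θ) = (r * cos θ, r * sin θ) := rfl
    have hsq : (r * cos θ) ^ 2 + (r * sin θ) ^ 2 = r ^ 2 := by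
      have := sin_sq_add_cos_sq θ
      ring_nf
      nlinarith [sin_sq_add_cos_sq θ]
    have hmem : (polarCoord.symm (r, θ)) ∈ sq2 ⁻¹' Iic x ↔ r ∈ Ioc 0 s := by
      simp only [hsymm, mem_preimage, mem_Iic, sq2, hsq, mem_Ioc, hr, true_and]
      constructor
      · intro h
        exact (Real.le_sqrt hr.le (by linarith)).2 (by linarith)
      · intro h
        have := (Real.le_sqrt hr.le (by linarith)).1 h
        linarith
    by_cases hmem' : r ∈ Ioc 0 s
    · rw [Set.indicator_of_mem (hmem.2 hmem'), Set.indicator_of_mem hmem', hsymm, smul_eq_mul]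
      simp only [hsq]
      ring
    · rw [Set.indicator_of_notMem (fun h => hmem' (hmem.1 h)),
        Set.indicator_of_notMem hmem']
      simp
  rw [setIntegral_congr_fun (polarCoord.open_target.measurableSet) hcongr]
  have hint : IntegrableOn
      (fun p : ℝ × ℝ => (Ioc 0 s).indicator (fun r => r * rexp (-r ^ 2 / 2)) p.1 * (2 * π)⁻¹)
      (Ioi 0 ×ˢ Ioo (-π) π) := by
    rw [IntegrableOn, Measure.volume_eq_prod, ← Measure.prod_restrict]
    refine Integrable.mul_prod ?_ (integrable_const ((2 * π)⁻¹ : ℝ))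
    refine Integrable.restrict ?_
    refine (IntegrableOn.integrable_indicator ?_ measurableSet_Ioc)
    exact Continuous.integrableOn_Ioc (by continuity)
  rw [show polarCoord.target = Ioi (0:ℝ) ×ˢ Ioo (-π) π from rfl, Measure.volume_eq_prod,
    setIntegral_prod _ hint]
  simp only [integral_const, Measure.restrict_apply_univ, Real.volume_Ioo, smul_eq_mul]
  rw [measureReal_def, Measure.restrict_apply_univ, Real.volume_Ioo, show π - (-π) = 2 * π by ring]
  have h2π : (0:ℝ) < 2 * π := by positivity
  have : ∀ r : ℝ, (ENNReal.ofReal (2*π)).toReal * ((Ioc 0 s).indicator (fun r => r * rexp (-r ^ 2 / 2)) r * (2 * π)⁻¹)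
      = (Ioc 0 s).indicator (fun r => r * rexp (-r ^ 2 / 2)) r := by
    intro r
    rw [ENNReal.toReal_ofReal h2π.le]
    field_simp
  rw [integral_congr_ae (Filter.Eventually.of_forall fun r => this r)]
  rw [setIntegral_indicator measurableSet_Ioc,
    Set.inter_eq_self_of_subset_right Set.Ioc_subset_Ioi_self]
  exact Ir hx

end StdLaplaceAux
namespace StdLaplaceAux

lemma expd_Iic (x : ℝ) :
    (volume.withDensity expd) (Iic x) = if 0 ≤ x then ENNReal.ofReal (1 - rexp (-x)) else 0 := by
  rw [withDensity_apply _ measurableSet_Iic]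
  unfold expd
  rw [setLIntegral_indicator measurableSet_Ici, Set.Ici_inter_Iic]
  by_cases hx : 0 ≤ x
  · rw [if_pos hx]
    rw [← ofReal_integral_eq_lintegral_ofReal
      ((Continuous.integrableOn_Icc (by continuity)))
      (Filter.Eventually.of_forall fun t => (Real.exp_pos _).le)]
    congr 1
    rw [MeasureTheory.integral_Icc_eq_integral_Ioc, ← intervalIntegral.integral_of_le hx]
    have hFTC : ∀ t : ℝ, HasDerivAt (fun t : ℝ => -rexp (-t)) (rexp (-t)) t := by
      intro t
      have h1 : HasDerivAt (fun t : ℝ => -t) (-1) t := (hasDerivAt_id t).neg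
      have h2 := (h1.exp).neg
      exact h2.congr_deriv (by ring)
    rw [intervalIntegral.integral_eq_sub_of_hasDerivAt (fun t _ => hFTC t)
      (Continuous.intervalIntegrable (by continuity) _ _)]
    simp
    ring
  · rw [if_neg hx]
    have : Icc 0 x = ∅ := Icc_eq_empty (by linarith [not_le.1 hx])
    rw [this]
    simp

lemma map_sq : Measure.map sq2 G2 = volume.withDensity expd := by
  haveI : IsProbabilityMeasure (Measure.map sq2 G2) :=
    Measure.isProbabilityMeasure_map sq2_meas.aemeasurable
  refine Measure.ext_of_Iic _ _ fun x => ?_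
  rw [Measure.map_apply sq2_meas measurableSet_Iic, expd_Iic]
  by_cases hx : 0 ≤ x
  · rw [if_pos hx, G2_disk hx]
  · rw [if_neg hx]
    have : sq2 ⁻¹' Iic x = ∅ := by
      ext p
      simp only [mem_preimage, mem_Iic, mem_empty_iff_false, iff_false, not_le, sq2]
      have : (0:ℝ) ≤ (p.1 ^ 2 + p.2 ^ 2) / 2 := by positivity
      linarith [not_le.1 hx]
    rw [this]
    simp

end StdLaplaceAux
namespace StdLaplaceAux

lemma intIoi (w m : ℝ) : ∫ v in Ioi m, rexp (-(w + 2 * v)) = rexp (-(w + 2 * m)) / 2 := by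
  have hderiv : ∀ v ∈ Ioi m, HasDerivAt (fun v : ℝ => -rexp (-(w + 2 * v)) / 2)
      (rexp (-(w + 2 * v))) v := by
    intro v _
    have h1 : HasDerivAt (fun v : ℝ => -(w + 2 * v)) (-2) v := by
      have := ((hasDerivAt_id v).const_mul 2).const_add w
      exact this.neg.congr_deriv (by ring)
    have h2 := ((h1.exp).neg.div_const 2)
    exact h2.congr_deriv (by ring)
  have hint : IntegrableOn (fun v => rexp (-(w + 2 * v))) (Ioi m) := by
    have : (fun v : ℝ => rexp (-(w + 2 * v))) = fun v => rexp (-w) * rexp (-2 * v) := by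
      funext v; rw [← Real.exp_add]; ring_nf
    rw [this]
    exact (exp_neg_integrableOn_Ioi m (by norm_num)).const_mul _
  have htend : Filter.Tendsto (fun v : ℝ => -rexp (-(w + 2 * v)) / 2) Filter.atTop (nhds 0) := by
    have h1 : Filter.Tendsto (fun v : ℝ => -(w + 2 * v)) Filter.atTop Filter.atBot := by
      have h2 : Filter.Tendsto (fun v : ℝ => w + 2 * v) Filter.atTop Filter.atTop :=
        Filter.tendsto_atTop_add_const_left _ _
          (Filter.Tendsto.const_mul_atTop (by norm_num) Filter.tendsto_id)
      exact Filter.tendsto_neg_atBot_iff.2 h2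
    have h3 := (Real.tendsto_exp_atBot.comp h1).neg
    simpa using h3.div_const 2
  have := integral_Ioi_of_hasDerivAt_of_tendsto (Continuous.continuousWithinAt (by continuity)) hderiv hint htend
  rw [this]
  ring

end StdLaplaceAux
namespace StdLaplaceAux

lemma lap_key (w : ℝ) :
    ∫⁻ v, expd (w + v) * expd v = ENNReal.ofReal ((1 / 2) * rexp (-|w|)) := by
  set m := max 0 (-w) with hm
  have hpt : ∀ v : ℝ, expd (w + v) * expd v
      = (Ici m).indicator (fun v => ENNReal.ofReal (rexp (-(w + 2 * v)))) v := by
    intro v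
    by_cases h1 : 0 ≤ v
    · by_cases h2 : 0 ≤ w + v
      · have hv : v ∈ Ici m := by
          simp only [mem_Ici, hm, max_le_iff]
          constructor <;> linarith
        rw [Set.indicator_of_mem hv]
        unfold expd
        rw [Set.indicator_of_mem (by exact h2), Set.indicator_of_mem (by exact h1),
          ← ENNReal.ofReal_mul (Real.exp_pos _).le, ← Real.exp_add]
        congr 2
        ring
      · have hv : v ∉ Ici m := by
          simp only [mem_Ici, hm, max_le_iff, not_and_or]
          right; push_neg at h2 ⊢; linarith
        rw [Set.indicator_of_notMem hv]
        unfold expd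
        rw [Set.indicator_of_notMem (by exact h2)]
        simp
    · have hv : v ∉ Ici m := by
        simp only [mem_Ici, hm, max_le_iff, not_and_or]
        left; push_neg at h1 ⊢; linarith
      rw [Set.indicator_of_notMem hv]
      unfold expd
      rw [Set.indicator_of_notMem (a := v) (by exact h1)]
      simp
  rw [lintegral_congr hpt, lintegral_indicator measurableSet_Ici]
  have hint : IntegrableOn (fun v => rexp (-(w + 2 * v))) (Ici m) := by
    rw [integrableOn_Ici_iff_integrableOn_Ioi]
    have : (fun v : ℝ => rexp (-(w + 2 * v))) = fun v => rexp (-w) * rexp (-2 * v) := by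
      funext v; rw [← Real.exp_add]; ring_nf
    rw [this]
    exact (exp_neg_integrableOn_Ioi m (by norm_num)).const_mul _
  rw [← ofReal_integral_eq_lintegral_ofReal hint
    (Filter.Eventually.of_forall fun v => (Real.exp_pos _).le)]
  rw [MeasureTheory.integral_Ici_eq_integral_Ioi, intIoi]
  congr 1
  rcases le_or_gt 0 w with hw | hw
  · rw [hm, max_eq_left (by linarith), abs_of_nonneg hw]
    ring
  · rw [hm, max_eq_right (by linarith), abs_of_neg hw]
    rw [show -(w + 2 * -w) = w by ring, show - -w = w from neg_neg w]
    ring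

instance : IsProbabilityMeasure ((volume : Measure ℝ).withDensity expd) := by
  rw [← map_sq]
  exact Measure.isProbabilityMeasure_map sq2_meas.aemeasurable

lemma map_sub :
    Measure.map (fun q : ℝ × ℝ => q.1 - q.2)
      (((volume : Measure ℝ).withDensity expd).prod ((volume : Measure ℝ).withDensity expd))
      = volume.withDensity (fun x => ENNReal.ofReal ((1 / 2) * rexp (-|x|))) := by
  have hsub : Measurable fun q : ℝ × ℝ => q.1 - q.2 := measurable_fst.sub measurable_snd
  ext A hA
  rw [Measure.map_apply hsub hA, withDensity_apply _ hA]
  rw [prod_withDensity _ _ expd_meas expd_meas, withDensity_apply _ (hsub hA),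
    ← lintegral_indicator (hsub hA)]
  have hpt : ∀ p : ℝ × ℝ,
      ((fun q : ℝ × ℝ => q.1 - q.2) ⁻¹' A).indicator (fun p : ℝ × ℝ => expd p.1 * expd p.2) p
      = A.indicator (fun _ => (1 : ℝ≥0∞)) (p.1 - p.2) * (expd p.1 * expd p.2) := by
    intro p
    by_cases h : p.1 - p.2 ∈ A
    · rw [Set.indicator_of_mem h, Set.indicator_of_mem (by exact h), one_mul]
    · rw [Set.indicator_of_notMem h, Set.indicator_of_notMem (by exact h), zero_mul]
  rw [lintegral_congr hpt, lintegral_prod _ (by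
    apply Measurable.aemeasurable
    exact ((measurable_const.indicator hA).comp (measurable_fst.sub measurable_snd)).mul
      ((expd_meas.comp measurable_fst).mul (expd_meas.comp measurable_snd)))]
  have hswap1 : ∫⁻ u, ∫⁻ v, A.indicator (fun _ => (1 : ℝ≥0∞)) (u - v) * (expd u * expd v)
      = ∫⁻ v, ∫⁻ u, A.indicator (fun _ => (1 : ℝ≥0∞)) (u - v) * (expd u * expd v) := by
    apply lintegral_lintegral_swap
    apply Measurable.aemeasurable
    exact ((measurable_const.indicator hA).comp (measurable_fst.sub measurable_snd)).mul
      ((expd_meas.comp measurable_fst).mul (expd_meas.comp measurable_snd))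
  rw [hswap1]
  have hsub1 : ∀ v : ℝ, ∫⁻ u, A.indicator (fun _ => (1 : ℝ≥0∞)) (u - v) * (expd u * expd v)
      = ∫⁻ w, A.indicator (fun _ => (1 : ℝ≥0∞)) w * (expd (w + v) * expd v) := by
    intro v
    rw [← lintegral_add_right_eq_self
      (fun u => A.indicator (fun _ => (1 : ℝ≥0∞)) (u - v) * (expd u * expd v)) v]
    congr 1
    funext w
    rw [add_sub_cancel_right]
  rw [lintegral_congr hsub1]
  have hswap2 : ∫⁻ v, ∫⁻ w, A.indicator (fun _ => (1 : ℝ≥0∞)) w * (expd (w + v) * expd v)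
      = ∫⁻ w, ∫⁻ v, A.indicator (fun _ => (1 : ℝ≥0∞)) w * (expd (w + v) * expd v) := by
    apply lintegral_lintegral_swap
    apply Measurable.aemeasurable
    exact ((measurable_const.indicator hA).comp measurable_snd).mul
      (((expd_meas.comp (measurable_snd.add measurable_fst))).mul (expd_meas.comp measurable_fst))
  rw [hswap2]
  have hfin : ∀ w : ℝ, A.indicator (fun _ => (1 : ℝ≥0∞)) w ≠ ⊤ := by
    intro w
    by_cases h : w ∈ A <;> simp [Set.indicator_apply, h]
  have hinner : ∀ w : ℝ, ∫⁻ v, A.indicator (fun _ => (1 : ℝ≥0∞)) w * (expd (w + v) * expd v)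
      = A.indicator (fun _ => (1 : ℝ≥0∞)) w * ENNReal.ofReal ((1 / 2) * rexp (-|w|)) := by
    intro w
    rw [lintegral_const_mul' _ _ (hfin w), lap_key]
  rw [lintegral_congr hinner]
  rw [← lintegral_indicator hA]
  congr 1
  funext w
  by_cases h : w ∈ A
  · rw [Set.indicator_of_mem h, Set.indicator_of_mem h, one_mul]
  · rw [Set.indicator_of_notMem h, Set.indicator_of_notMem h, zero_mul]

end StdLaplaceAux
namespace StdLaplaceAux

lemma sq2_Φ (x : (ℝ × ℝ) × (ℝ × ℝ)) :
    sq2 (Φ x).1 - sq2 (Φ x).2 = x.1.1 * x.1.2 - x.2.1 * x.2.2 := by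
  obtain ⟨⟨a, b⟩, c, d⟩ := x
  have h2 : Real.sqrt 2 ^ 2 = 2 := Real.sq_sqrt (by norm_num)
  have h2' : Real.sqrt 2 ≠ 0 := by positivity
  simp only [Φ, tmap, R, R', sq2]
  field_simp
  ring_nf
  rw [h2]
  ring

end StdLaplaceAux

open StdLaplaceAux in
theorem stmt_10 {Ω : Type*} [MeasurableSpace Ω] (μ : Measure Ω) [IsProbabilityMeasure μ]
    (Z : Fin 4 → Ω → ℝ) (hm : ∀ i, Measurable (Z i))
    (hd : ∀ i, Measure.map (Z i) μ = gaussianReal 0 1)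
    (hind : iIndepFun Z μ) :
    Measure.map (fun ω => Z 0 ω * Z 2 ω - Z 1 ω * Z 3 ω) μ =
      volume.withDensity (fun x => ENNReal.ofReal ((1 / 2) * Real.exp (-|x|))) := by
  have hpm : Measurable fun ω => ((Z 0 ω, Z 2 ω), (Z 1 ω, Z 3 ω)) :=
    ((hm 0).prodMk (hm 2)).prodMk ((hm 1).prodMk (hm 3))
  -- joint law
  have h02 : IndepFun (Z 0) (Z 2) μ := hind.indepFun (by decide)
  have h13 : IndepFun (Z 1) (Z 3) μ := hind.indepFun (by decide)
  have m02 : Measure.map (fun ω => (Z 0 ω, Z 2 ω)) μ = G2 := by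
    rw [(indepFun_iff_map_prod_eq_prod_map_map (hm 0).aemeasurable (hm 2).aemeasurable).1 h02,
      hd 0, hd 2]
    rfl
  have m13 : Measure.map (fun ω => (Z 1 ω, Z 3 ω)) μ = G2 := by
    rw [(indepFun_iff_map_prod_eq_prod_map_map (hm 1).aemeasurable (hm 3).aemeasurable).1 h13,
      hd 1, hd 3]
    rfl
  have hpair : IndepFun (fun ω => (Z 0 ω, Z 2 ω)) (fun ω => (Z 1 ω, Z 3 ω)) μ :=
    hind.indepFun_prodMk_prodMk hm 0 2 1 3 (by decide) (by decide) (by decide) (by decide)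
  have hjoint : Measure.map (fun ω => ((Z 0 ω, Z 2 ω), (Z 1 ω, Z 3 ω))) μ = Q := by
    rw [(indepFun_iff_map_prod_eq_prod_map_map ((hm 0).prodMk (hm 2)).aemeasurable
      ((hm 1).prodMk (hm 3)).aemeasurable).1 hpair, m02, m13]
    rfl
  -- decompose the determinant
  have hfun : (fun ω => Z 0 ω * Z 2 ω - Z 1 ω * Z 3 ω)
      = (fun q : ℝ × ℝ => q.1 - q.2) ∘ (Prod.map sq2 sq2) ∘ Φ ∘
        (fun ω => ((Z 0 ω, Z 2 ω), (Z 1 ω, Z 3 ω))) := by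
    funext ω
    simp only [Function.comp_apply, Prod.map_apply]
    rw [← sq2_Φ ((Z 0 ω, Z 2 ω), (Z 1 ω, Z 3 ω))]
    rfl
  have hmsq : Measurable (Prod.map sq2 sq2) := sq2_meas.prodMap sq2_meas
  have hmsub : Measurable fun q : ℝ × ℝ => q.1 - q.2 := measurable_fst.sub measurable_snd
  rw [hfun, ← Measure.map_map hmsub (hmsq.comp (Φ_meas.comp hpm)),
    ← Measure.map_map hmsq (Φ_meas.comp hpm),
    ← Measure.map_map Φ_meas hpm, hjoint, map_Φ_Q]
  have : Measure.map (Prod.map sq2 sq2) Q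
      = ((volume : Measure ℝ).withDensity expd).prod ((volume : Measure ℝ).withDensity expd) := by
    rw [Q, ← Measure.map_prod_map _ _ sq2_meas sq2_meas, map_sq]
  rw [this, StdLaplaceAux.map_sub]
end

section
/- If X²_k and X²_{k+1} are independent chi-squared random variables with k and k+1 degrees of freedom, then 4·X²_k·X²_{k+1} has the same distribution as (X²_{2k})², the square of a chi-squared random variable with 2k degrees of freedom. -/
open MeasureTheory ProbabilityTheory Real

open Set
open scoped ENNReal

section Helpers

lemma my_lintegral_image {s : Set ℝ} {f f' : ℝ → ℝ} (hs : MeasurableSet s)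
    (hf' : ∀ x ∈ s, HasDerivWithinAt f (f' x) s x) (hf : Set.InjOn f s) (g : ℝ → ℝ≥0∞) :
    ∫⁻ x in f '' s, g x = ∫⁻ x in s, ENNReal.ofReal |f' x| * g (f x) := by
  simpa only [ContinuousLinearMap.det_toSpanSingleton] using
    MeasureTheory.lintegral_image_eq_lintegral_abs_det_fderiv_mul MeasureTheory.volume hs
      (fun x hx => (hf' x hx).hasFDerivWithinAt) hf g

lemma my_lintegral_Ioi {G : ℝ → ℝ≥0∞} (hG : ∀ x < 0, G x = 0) :
    ∫⁻ x, G x = ∫⁻ x in Ioi 0, G x := by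
  rw [← lintegral_indicator measurableSet_Ioi G]
  refine lintegral_congr_ae ?_
  have h0 : ∀ᵐ x : ℝ, x ≠ 0 := by
    refine ae_iff.mpr ?_
    simpa using Real.volume_singleton
  filter_upwards [h0] with x hx
  rcases lt_trichotomy x 0 with h | h | h
  · simp [indicator_of_notMem, notMem_Ioi.2 h.le, hG x h]
  · exact absurd h hx
  · simp [indicator_of_mem, mem_Ioi.2 h]

lemma lint_gauss : ∫⁻ x : ℝ, ENNReal.ofReal (exp (-x^2)) = ENNReal.ofReal (√π) := by
  rw [← ofReal_integral_eq_lintegral_ofReal]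
  · congr 1
    have := integral_gaussian 1
    simpa using this
  · simpa using integrable_exp_neg_mul_sq one_pos
  · exact ae_of_all _ fun x => (exp_pos _).le

lemma glasser {A B : ℝ} (hA : 0 < A) (hB : 0 < B) :
    ∫⁻ u in Ioi (0:ℝ), ENNReal.ofReal (exp (-(A*u - B/u)^2)) = ENNReal.ofReal (√π / (2*A)) := by
  set e : ℝ → ℝ≥0∞ := fun u => ENNReal.ofReal (exp (-(A*u - B/u)^2)) with he
  have he_meas : Measurable e := by fun_prop
  have himg1 : (fun u => B/(A*u)) '' Ioi (0:ℝ) = Ioi 0 := by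
    ext y; simp only [mem_image, mem_Ioi]; constructor
    · rintro ⟨x, hx, rfl⟩
      exact div_pos hB (by positivity)
    · intro hy
      refine ⟨B/(A*y), div_pos hB (by positivity), ?_⟩
      field_simp
  have hinj1 : Set.InjOn (fun u => B/(A*u)) (Ioi (0:ℝ)) := by
    have hanti : StrictAntiOn (fun u => B/(A*u)) (Ioi (0:ℝ)) := by
      intro x hx y hy hxy
      have hx0 : (0:ℝ) < x := mem_Ioi.mp hx
      exact div_lt_div_of_pos_left hB (by positivity) (mul_lt_mul_of_pos_left hxy hA)
    exact hanti.injOn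
  have hrefl : ∫⁻ u in Ioi (0:ℝ), ENNReal.ofReal (B/(A*u^2)) * e u
      = ∫⁻ u in Ioi (0:ℝ), e u := by
    conv_rhs => rw [← himg1]
    rw [my_lintegral_image measurableSet_Ioi
      (f' := fun u => -(B/(A*u^2)))
      (fun x hx => by
        have hx0 : x ≠ 0 := ne_of_gt (mem_Ioi.mp hx)
        have heq : (fun u : ℝ => B/(A*u)) = fun u => (B/A) * u⁻¹ := by
          funext u; rw [← div_div, div_eq_mul_inv]
        have h2 := (hasDerivAt_inv hx0).const_mul (B/A)
        rw [← heq] at h2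
        have hval : B/A * (-(x^2)⁻¹) = -(B/(A*x^2)) := by
          rw [mul_neg, ← div_eq_mul_inv, div_div]
        rw [hval] at h2
        exact h2.hasDerivWithinAt)
      hinj1 e]
    refine setLIntegral_congr_fun measurableSet_Ioi (fun x hx => ?_)
    have hx0 : (x:ℝ) ≠ 0 := ne_of_gt (mem_Ioi.mp hx)
    have h1 : |(-(B/(A*x^2)))| = B/(A*x^2) := by
      rw [abs_neg, abs_of_pos (div_pos hB (by positivity))]
    have h2 : e (B/(A*x)) = e x := by
      rw [he]; simp only []
      congr 2
      have : A*(B/(A*x)) - B/(B/(A*x)) = -(A*x - B/x) := by field_simp; ring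
      rw [this, neg_sq]
    rw [h1, h2]
  have himg2 : (fun u => A*u - B/u) '' Ioi (0:ℝ) = univ := by
    ext y; simp only [mem_image, mem_Ioi, mem_univ, iff_true]
    set s := sqrt (y^2 + 4*A*B) with hs
    have hs2 : s^2 = y^2 + 4*A*B := sq_sqrt (by positivity)
    have hsnn : 0 ≤ s := sqrt_nonneg _
    have hsy : -y < s := by nlinarith
    have hy : 0 < y + s := by linarith
    refine ⟨(y + s)/(2*A), by positivity, ?_⟩
    rw [eq_comm, ← sub_eq_zero]
    have expand : y - (A * ((y + s) / (2 * A)) - B / ((y + s) / (2 * A)))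
        = (y^2 + 4*A*B - s^2) / (2*(y+s)) := by
      field_simp
      ring
    rw [expand, hs2]
    simp
  have hTgauss : ∫⁻ u in Ioi (0:ℝ), ENNReal.ofReal (A + B/u^2) * e u = ENNReal.ofReal (√π) := by
    have hderiv : ∀ x ∈ Ioi (0:ℝ), HasDerivWithinAt (fun u => A*u - B/u) (A + B/x^2)
        (Ioi (0:ℝ)) x := by
      intro x hx
      have hx0 : x ≠ 0 := ne_of_gt (mem_Ioi.mp hx)
      have h1 : HasDerivAt (fun u : ℝ => A*u) A x := by
        simpa using (hasDerivAt_id x).const_mul A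
      have heq : (fun u : ℝ => B/u) = fun u => B * u⁻¹ := by
        funext u; rw [div_eq_mul_inv]
      have h2 := (hasDerivAt_inv hx0).const_mul B
      rw [← heq] at h2
      have h3 := h1.sub h2
      have hval : A - B * (-(x^2)⁻¹) = A + B/x^2 := by
        rw [mul_neg, sub_neg_eq_add, ← div_eq_mul_inv]
      rw [hval] at h3
      exact h3.hasDerivWithinAt
    have hinj : Set.InjOn (fun u => A*u - B/u) (Ioi (0:ℝ)) := by
      have hmono : StrictMonoOn (fun u => A*u - B/u) (Ioi (0:ℝ)) := by
        intro x hx y hy hxy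
        simp only [mem_Ioi] at hx hy
        have h1 : A*x < A*y := mul_lt_mul_of_pos_left hxy hA
        have h2 : B/y < B/x := div_lt_div_of_pos_left hB hx hxy
        simp only []
        linarith
      exact hmono.injOn
    have key := my_lintegral_image measurableSet_Ioi hderiv hinj
      (fun x => ENNReal.ofReal (exp (-x^2)))
    rw [himg2, Measure.restrict_univ, lint_gauss] at key
    rw [key]
    refine setLIntegral_congr_fun measurableSet_Ioi (fun x hx => ?_)
    have hx0 : (0:ℝ) < x := mem_Ioi.mp hx
    rw [abs_of_pos (by positivity : (0:ℝ) < A + B/x^2)]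
  have hsplit : ∫⁻ u in Ioi (0:ℝ), ENNReal.ofReal (A + B/u^2) * e u
      = ENNReal.ofReal (2*A) * ∫⁻ u in Ioi (0:ℝ), e u := by
    have hptwise : ∀ u ∈ Ioi (0:ℝ), ENNReal.ofReal (A + B/u^2) * e u
        = ENNReal.ofReal A * e u + ENNReal.ofReal A * (ENNReal.ofReal (B/(A*u^2)) * e u) := by
      intro u hu
      have hu0 : (0:ℝ) < u := mem_Ioi.mp hu
      have h3 : A + B/u^2 = A + A * (B/(A*u^2)) := by
        field_simp
      rw [h3, ENNReal.ofReal_add hA.le (by positivity), ENNReal.ofReal_mul hA.le, add_mul,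
        mul_assoc]
    rw [setLIntegral_congr_fun measurableSet_Ioi hptwise]
    rw [lintegral_add_left (by fun_prop)]
    rw [lintegral_const_mul _ (by fun_prop), lintegral_const_mul _ (by fun_prop), hrefl]
    rw [two_mul, ENNReal.ofReal_add hA.le hA.le, add_mul]
  have h2A0 : ENNReal.ofReal (2*A) ≠ 0 := by
    simp only [ne_eq, ENNReal.ofReal_eq_zero, not_le]
    positivity
  rw [ENNReal.ofReal_div_of_pos (by positivity),
    ENNReal.eq_div_iff h2A0 ENNReal.ofReal_ne_top, ← hsplit, hTgauss]

lemma bessel_half {p q : ℝ} (hp : 0 < p) (hq : 0 < q) :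
    ∫⁻ x in Ioi (0:ℝ), ENNReal.ofReal (x ^ (-(3:ℝ)/2) * exp (-(p*x) - q/x))
      = ENNReal.ofReal (√(π/q) * exp (-(2*√(p*q)))) := by
  have himg : (fun u : ℝ => (u^2)⁻¹) '' Ioi (0:ℝ) = Ioi 0 := by
    ext y; simp only [mem_image, mem_Ioi]; constructor
    · rintro ⟨x, hx, rfl⟩; positivity
    · intro hy
      refine ⟨(√y)⁻¹, by positivity, ?_⟩
      rw [inv_pow, inv_inv, sq_sqrt hy.le]
  have hderiv : ∀ x ∈ Ioi (0:ℝ), HasDerivWithinAt (fun u : ℝ => (u^2)⁻¹) (-(2/x^3))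
      (Ioi (0:ℝ)) x := by
    intro x hx
    have hx0 : (0:ℝ) < x := mem_Ioi.mp hx
    have h1 : HasDerivAt (fun u : ℝ => u^2) (2*x) x := by
      simpa using hasDerivAt_pow 2 x
    have h2 := h1.inv (by positivity)
    have : -(2*x) / (x^2)^2 = -(2/x^3) := by
      field_simp
    rw [this] at h2
    exact h2.hasDerivWithinAt
  have hinj : Set.InjOn (fun u : ℝ => (u^2)⁻¹) (Ioi (0:ℝ)) := by
    have hanti : StrictAntiOn (fun u : ℝ => (u^2)⁻¹) (Ioi (0:ℝ)) := by
      intro x hx y hy hxy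
      have hx0 : (0:ℝ) < x := mem_Ioi.mp hx
      have h2 : x^2 < y^2 := by nlinarith
      exact inv_strictAnti₀ (by positivity) h2
    exact hanti.injOn
  rw [← himg, my_lintegral_image measurableSet_Ioi hderiv hinj]
  have hpt : ∀ u ∈ Ioi (0:ℝ),
      ENNReal.ofReal |(-(2/u^3))| * ENNReal.ofReal (((u^2)⁻¹) ^ (-(3:ℝ)/2)
        * exp (-(p*(u^2)⁻¹) - q/((u^2)⁻¹)))
      = ENNReal.ofReal (2 * exp (-(2*√(p*q)))) * ENNReal.ofReal (exp (-(√q*u - √p/u)^2)) := by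
    intro u hu
    have hu0 : (0:ℝ) < u := mem_Ioi.mp hu
    have habs : |(-(2/u^3))| = 2/u^3 := by rw [abs_neg, abs_of_pos (by positivity)]
    have hrpow : ((u^2)⁻¹ : ℝ) ^ (-(3:ℝ)/2) = u^3 := by
      have h23 : ((u^2)⁻¹ : ℝ) = u ^ (-2:ℝ) := by
        rw [Real.rpow_neg hu0.le, Real.rpow_two]
      rw [h23, ← Real.rpow_mul hu0.le]
      norm_num
    have harg : -(p*(u^2)⁻¹) - q/((u^2)⁻¹) = -(√q*u - √p/u)^2 + (-(2*√(p*q))) := by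
      have e1 : (√q)^2 = q := sq_sqrt hq.le
      have e2 : (√p)^2 = p := sq_sqrt hp.le
      have e3 : √p * √q = √(p*q) := (Real.sqrt_mul hp.le q).symm
      have h1 : (√q*u - √p/u)^2 = q*u^2 - 2*√(p*q) + p/u^2 := by
        rw [← e3]
        field_simp
        linear_combination (u^4) * e1 + e2
      rw [h1]
      field_simp
      ring
    rw [habs, hrpow, harg, Real.exp_add, ← ENNReal.ofReal_mul (by positivity),
      ← ENNReal.ofReal_mul (by positivity)]
    congr 1
    rw [Real.exp_neg]
    field_simp
  rw [setLIntegral_congr_fun measurableSet_Ioi hpt,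
    lintegral_const_mul _ (by fun_prop), glasser (by positivity : (0:ℝ) < √q) (by positivity),
    ← ENNReal.ofReal_mul (by positivity)]
  congr 1
  rw [Real.sqrt_div Real.pi_nonneg q]
  have hsq : √q ≠ 0 := by positivity
  field_simp

lemma two_rpow_half (y : ℝ) : ((1:ℝ)/2)^y = (2:ℝ)^(-y) := by
  rw [one_div, ← Real.rpow_neg_one (2:ℝ), ← Real.rpow_mul (by norm_num : (0:ℝ) ≤ 2)]
  norm_num

lemma four_rpow (y : ℝ) : (4:ℝ)^y = (2:ℝ)^(2*y) := by
  rw [show (4:ℝ) = (2:ℝ)^(2:ℝ) by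
      rw [show (2:ℝ) = ((2:ℕ):ℝ) by norm_num, Real.rpow_natCast]; norm_num,
    ← Real.rpow_mul (by norm_num : (0:ℝ) ≤ 2)]

lemma sqrt_eight : √(8:ℝ) = (2:ℝ)^((3:ℝ)/2) := by
  rw [show (8:ℝ) = (2:ℝ)^(3:ℝ) by
      rw [show (3:ℝ) = ((3:ℕ):ℝ) by norm_num, Real.rpow_natCast]; norm_num,
    Real.sqrt_eq_rpow, ← Real.rpow_mul (by norm_num : (0:ℝ) ≤ 2)]
  norm_num

lemma const_id (k : ℕ) (hk : 1 ≤ k) :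
    ((1/2:ℝ)^((k:ℝ)/2) / Gamma ((k:ℝ)/2)) * ((1/2:ℝ)^(((k:ℝ)+1)/2) / Gamma (((k:ℝ)+1)/2)) *
      (4:ℝ)^(-(((k:ℝ)+1)/2)) * √(8*π) = ((1/2:ℝ)^((k:ℝ)) / Gamma ((k:ℝ))) / 2 := by
  have hk0 : (0:ℝ) < (k:ℝ) := by exact_mod_cast hk
  set a := (k:ℝ)/2 with ha_def
  have ha : 0 < a := by positivity
  have hb : ((k:ℝ)+1)/2 = a + 1/2 := by rw [ha_def]; ring
  have dup := Real.Gamma_mul_Gamma_add_half a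
  rw [show 2*a = (k:ℝ) by rw [ha_def]; ring] at dup
  have hGa : 0 < Gamma a := Gamma_pos_of_pos ha
  have hGb : 0 < Gamma (a + 1/2) := Gamma_pos_of_pos (by linarith)
  have hGk : 0 < Gamma (k:ℝ) := Gamma_pos_of_pos hk0
  have hsp : 0 < √π := by positivity
  rw [hb, two_rpow_half, two_rpow_half, two_rpow_half, four_rpow,
    Real.sqrt_mul (by norm_num : (0:ℝ) ≤ 8), sqrt_eight]
  rw [div_mul_div_comm, div_mul_eq_mul_div, div_mul_eq_mul_div, div_div]
  rw [dup]
  rw [div_eq_div_iff (by positivity) (by positivity)]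
  have key : (2:ℝ)^(-a) * (2:ℝ)^(-(a+1/2)) * (2:ℝ)^(2 * -(a+1/2)) * (2:ℝ)^((3:ℝ)/2) * 2
      = (2:ℝ)^(-(k:ℝ)) * (2:ℝ)^(1-(k:ℝ)) := by
    rw [← Real.rpow_add (by norm_num : (0:ℝ) < 2), ← Real.rpow_add (by norm_num : (0:ℝ) < 2),
      ← Real.rpow_add (by norm_num : (0:ℝ) < 2),
      ← Real.rpow_add_one (by norm_num : (2:ℝ) ≠ 0),
      ← Real.rpow_add (by norm_num : (0:ℝ) < 2)]
    congr 1
    rw [ha_def]; ring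
  linear_combination (Gamma (k:ℝ) * √π) * key

lemma density_eq {k : ℕ} (hk : 1 ≤ k) {t : ℝ} (ht : 0 < t) :
    ∫⁻ x in Ioi (0:ℝ), gammaPDF ((k:ℝ)/2) (1/2) x *
      (ENNReal.ofReal (1/(4*x)) * gammaPDF (((k:ℝ)+1)/2) (1/2) (t/(4*x)))
    = gammaPDF (k:ℝ) (1/2) (√t) * ENNReal.ofReal (1/(2*√t)) := by
  have hk0 : (0:ℝ) < (k:ℝ) := by exact_mod_cast hk
  set a : ℝ := (k:ℝ)/2 with ha_def
  set b : ℝ := ((k:ℝ)+1)/2 with hb_def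
  have ha : 0 < a := by positivity
  have hb : 0 < b := by positivity
  have hGa : 0 < Gamma a := Gamma_pos_of_pos ha
  have hGb : 0 < Gamma b := Gamma_pos_of_pos hb
  have hGk : 0 < Gamma (k:ℝ) := Gamma_pos_of_pos hk0
  set K : ℝ := ((1/2:ℝ)^a / Gamma a) * ((1/2:ℝ)^b / Gamma b) * t^(b-1) * (4:ℝ)^(-b) with hK_def
  have hKnn : 0 ≤ K := by positivity
  have hpt : ∀ x ∈ Ioi (0:ℝ), gammaPDF ((k:ℝ)/2) (1/2) x *
      (ENNReal.ofReal (1/(4*x)) * gammaPDF (((k:ℝ)+1)/2) (1/2) (t/(4*x)))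
      = ENNReal.ofReal (K * (x ^ (-(3:ℝ)/2) * exp (-(1/2*x) - (t/8)/x))) := by
    intro x hx
    have hx0 : (0:ℝ) < x := mem_Ioi.mp hx
    have h4x : (0:ℝ) < t/(4*x) := by positivity
    rw [← ha_def, ← hb_def]
    rw [gammaPDF, gammaPDF,
      ← ENNReal.ofReal_mul (show (0:ℝ) ≤ 1/(4*x) by positivity),
      ← ENNReal.ofReal_mul (gammaPDFReal_nonneg ha (by norm_num) x)]
    congr 1
    simp only [gammaPDFReal, if_pos hx0.le, if_pos h4x.le]
    have h1 : (t/(4*x))^(b-1) = t^(b-1) / (4*x)^(b-1) :=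
      Real.div_rpow ht.le (show (0:ℝ) ≤ 4*x by positivity) (b-1)
    have h2 : ((4:ℝ)*x)^(b-1) = (4:ℝ)^(b-1) * x^(b-1) := Real.mul_rpow (by norm_num) hx0.le
    have h3 : x^(a-1) / (x^(b-1) * x) = x ^ (-(3:ℝ)/2) := by
      rw [← Real.rpow_add_one hx0.ne' (b-1), ← Real.rpow_sub hx0]
      congr 1
      rw [ha_def, hb_def]; ring
    have h4 : (4:ℝ)^(b-1) * 4 = (4:ℝ)^b := by
      rw [← Real.rpow_add_one (by norm_num : (4:ℝ) ≠ 0) (b-1)]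
      norm_num
    have h5 : ((4:ℝ)^b)⁻¹ = (4:ℝ)^(-b) := (Real.rpow_neg (by norm_num) b).symm
    have h6 : exp (-(1/2*x)) * exp (-(1/2*(t/(4*x)))) = exp (-(1/2*x) - (t/8)/x) := by
      rw [← Real.exp_add]
      congr 1
      field_simp
      ring
    calc (1/2:ℝ)^a / Gamma a * x^(a-1) * exp (-(1/2*x)) * (1/(4*x) *
          ((1/2:ℝ)^b / Gamma b * (t/(4*x))^(b-1) * exp (-(1/2*(t/(4*x))))))
        = ((1/2:ℝ)^a / Gamma a) * ((1/2:ℝ)^b / Gamma b) * t^(b-1) *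
            (x^(a-1) / (x^(b-1) * x)) * (((4:ℝ)^(b-1) * 4)⁻¹) *
            (exp (-(1/2*x)) * exp (-(1/2*(t/(4*x))))) := by
          rw [h1, h2]
          field_simp
      _ = K * (x ^ (-(3:ℝ)/2) * exp (-(1/2*x) - (t/8)/x)) := by
          rw [h3, h4, h5, h6, hK_def]
          ring
  rw [setLIntegral_congr_fun measurableSet_Ioi hpt]
  have hsplit : ∀ x : ℝ, ENNReal.ofReal (K * (x ^ (-(3:ℝ)/2) * exp (-(1/2*x) - (t/8)/x)))
      = ENNReal.ofReal K * ENNReal.ofReal (x ^ (-(3:ℝ)/2) * exp (-(1/2*x) - (t/8)/x)) := by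
    intro x
    rw [← ENNReal.ofReal_mul hKnn]
  simp_rw [hsplit]
  rw [lintegral_const_mul _ (by fun_prop), bessel_half (by norm_num : (0:ℝ) < 1/2) (by positivity),
    ← ENNReal.ofReal_mul hKnn]
  rw [gammaPDF, ← ENNReal.ofReal_mul (gammaPDFReal_nonneg hk0 (by norm_num) (√t))]
  congr 1
  have e16 : (1/2:ℝ) * (t/8) = t/16 := by ring
  have e4 : √(16:ℝ) = 4 := by
    rw [show (16:ℝ) = 4^2 by norm_num, Real.sqrt_sq (by norm_num : (0:ℝ) ≤ 4)]
  have esq : √((1/2:ℝ) * (t/8)) = √t / 4 := by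
    rw [e16, Real.sqrt_div ht.le 16, e4]
  have epi : √(π/(t/8)) = √(8*π) / √t := by
    rw [show π/(t/8) = (8*π)/t by ring, Real.sqrt_div (by positivity) t]
  rw [esq, epi]
  simp only [gammaPDFReal]
  rw [if_pos (Real.sqrt_nonneg t)]
  have hst : (0:ℝ) < √t := Real.sqrt_pos.mpr ht
  have htp : t^(b-1) = (√t)^((k:ℝ)-1) := by
    rw [Real.sqrt_eq_rpow, ← Real.rpow_mul ht.le]
    congr 1
    rw [hb_def]; ring
  have hexp : exp (-(2*(√t/4))) = exp (-(1/2*√t)) := by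
    congr 1; ring
  rw [hexp, hK_def]
  have hc := const_id k hk
  rw [← ha_def, ← hb_def] at hc
  calc ((1/2:ℝ)^a / Gamma a) * ((1/2:ℝ)^b / Gamma b) * t^(b-1) * (4:ℝ)^(-b) *
        (√(8*π)/√t * exp (-(1/2*√t)))
      = (((1/2:ℝ)^a / Gamma a) * ((1/2:ℝ)^b / Gamma b) * (4:ℝ)^(-b) * √(8*π)) *
          t^(b-1) / √t * exp (-(1/2*√t)) := by ring
    _ = (((1/2:ℝ)^((k:ℝ)) / Gamma ((k:ℝ))) / 2) * (√t)^((k:ℝ)-1) / √t * exp (-(1/2*√t)) := by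
          rw [hc, htp]
    _ = (1/2:ℝ)^((k:ℝ)) / Gamma ((k:ℝ)) * (√t)^((k:ℝ)-1) * exp (-(1/2*√t)) * (1/(2*√t)) := by
          field_simp

lemma measurable_gammaPDF' (a r : ℝ) : Measurable (gammaPDF a r) :=
  (measurable_gammaPDFReal a r).ennreal_ofReal

lemma map_sq_apply (k : ℕ) (hk : 1 ≤ k) {s : Set ℝ} (hs : MeasurableSet s) :
    Measure.map (fun x : ℝ => x ^ 2) (gammaMeasure (k:ℝ) (1/2)) s
      = ∫⁻ t in Ioi (0:ℝ), s.indicator (fun _ => (1:ℝ≥0∞)) t *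
          (gammaPDF (k:ℝ) (1/2) (√t) * ENNReal.ofReal (1/(2*√t))) := by
  classical
  have hsq : Measurable fun x : ℝ => x ^ 2 := by fun_prop
  rw [Measure.map_apply hsq hs]
  show (volume.withDensity (gammaPDF (k:ℝ) (1/2))) _ = _
  rw [withDensity_apply _ (hsq hs), ← lintegral_indicator (hsq hs)]
  rw [my_lintegral_Ioi (G := ((fun x : ℝ => x ^ 2) ⁻¹' s).indicator (gammaPDF (k:ℝ) (1/2)))
    (fun x hx => by
      rw [indicator_apply]
      split
      · exact gammaPDF_of_neg hx
      · rfl)]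
  have himg : (fun x : ℝ => x^2) '' Ioi 0 = Ioi 0 := by
    ext y; simp only [mem_image, mem_Ioi]; constructor
    · rintro ⟨x, hx, rfl⟩; positivity
    · intro hy
      exact ⟨√y, Real.sqrt_pos.mpr hy, Real.sq_sqrt hy.le⟩
  have hderiv : ∀ x ∈ Ioi (0:ℝ), HasDerivWithinAt (fun x : ℝ => x^2) (2*x) (Ioi (0:ℝ)) x := by
    intro x hx
    simpa using (hasDerivAt_pow 2 x).hasDerivWithinAt
  have hinj : Set.InjOn (fun x : ℝ => x^2) (Ioi (0:ℝ)) := by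
    have hmono : StrictMonoOn (fun x : ℝ => x^2) (Ioi (0:ℝ)) := by
      intro x hx y hy hxy
      have hx0 : (0:ℝ) < x := mem_Ioi.mp hx
      simp only []
      nlinarith
    exact hmono.injOn
  conv_rhs => rw [← himg, my_lintegral_image measurableSet_Ioi hderiv hinj]
  refine setLIntegral_congr_fun measurableSet_Ioi (fun x hx => ?_)
  have hx0 : (0:ℝ) < x := mem_Ioi.mp hx
  have hsq2 : √(x^2) = x := Real.sqrt_sq hx0.le
  rw [hsq2, abs_of_pos (by positivity : (0:ℝ) < 2*x)]
  by_cases hmem : x^2 ∈ s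
  · rw [indicator_of_mem hmem, indicator_of_mem (show x ∈ (fun x : ℝ => x^2) ⁻¹' s from hmem)]
    rw [one_mul, ← mul_assoc, mul_comm (ENNReal.ofReal (2*x)) (gammaPDF (k:ℝ) (1/2) x),
      mul_assoc, ← ENNReal.ofReal_mul (by positivity)]
    rw [mul_one_div, div_self (by positivity : (2:ℝ)*x ≠ 0)]
    simp
  · rw [indicator_of_notMem hmem,
      indicator_of_notMem (show x ∉ (fun x : ℝ => x^2) ⁻¹' s from hmem)]
    simp

lemma map_mul_apply (k : ℕ) (hk : 1 ≤ k) {s : Set ℝ} (hs : MeasurableSet s) :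
    Measure.map (fun p : ℝ × ℝ => 4 * p.1 * p.2)
      ((gammaMeasure ((k:ℝ)/2) (1/2)).prod (gammaMeasure (((k:ℝ)+1)/2) (1/2))) s
    = ∫⁻ t in Ioi (0:ℝ), s.indicator (fun _ => (1:ℝ≥0∞)) t *
        (gammaPDF (k:ℝ) (1/2) (√t) * ENNReal.ofReal (1/(2*√t))) := by
  classical
  have hk0 : (0:ℝ) < (k:ℝ) := by exact_mod_cast hk
  have hapos : (0:ℝ) < (k:ℝ)/2 := by positivity
  have hbpos : (0:ℝ) < ((k:ℝ)+1)/2 := by positivity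
  haveI : IsProbabilityMeasure (gammaMeasure (((k:ℝ)+1)/2) (1/2)) :=
    isProbabilityMeasure_gammaMeasure hbpos (by norm_num)
  have hm : Measurable (fun p : ℝ × ℝ => 4 * p.1 * p.2) := by fun_prop
  rw [Measure.map_apply hm hs]
  rw [Measure.prod_apply (hm hs)]
  show ∫⁻ x, _ ∂(volume.withDensity (gammaPDF ((k:ℝ)/2) (1/2))) = _
  rw [lintegral_withDensity_eq_lintegral_mul _ (measurable_gammaPDF' _ _)
    (measurable_measure_prodMk_left (hm hs))]
  simp only [Pi.mul_apply]
  rw [my_lintegral_Ioi (fun x hx => by rw [gammaPDF_of_neg hx, zero_mul])]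
  -- inner computation for x > 0
  have hinner : ∀ x ∈ Ioi (0:ℝ),
      gammaPDF ((k:ℝ)/2) (1/2) x *
        (gammaMeasure (((k:ℝ)+1)/2) (1/2)) (Prod.mk x ⁻¹' ((fun p : ℝ × ℝ => 4*p.1*p.2) ⁻¹' s))
      = gammaPDF ((k:ℝ)/2) (1/2) x *
          ∫⁻ t in Ioi (0:ℝ), s.indicator (fun _ => (1:ℝ≥0∞)) t *
            (ENNReal.ofReal (1/(4*x)) * gammaPDF (((k:ℝ)+1)/2) (1/2) (t/(4*x))) := by
    intro x hx
    have hx0 : (0:ℝ) < x := mem_Ioi.mp hx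
    congr 1
    have hpre : Prod.mk x ⁻¹' ((fun p : ℝ × ℝ => 4*p.1*p.2) ⁻¹' s)
        = (fun y : ℝ => 4*x*y) ⁻¹' s := rfl
    have hEmeas : MeasurableSet ((fun y : ℝ => 4*x*y) ⁻¹' s) :=
      (by fun_prop : Measurable fun y : ℝ => 4*x*y) hs
    rw [hpre]
    show (volume.withDensity (gammaPDF (((k:ℝ)+1)/2) (1/2))) _ = _
    rw [withDensity_apply _ hEmeas, ← lintegral_indicator hEmeas]
    rw [my_lintegral_Ioi (G := ((fun y : ℝ => 4*x*y) ⁻¹' s).indicator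
        (gammaPDF (((k:ℝ)+1)/2) (1/2)))
      (fun y hy => by
        rw [indicator_apply]
        split
        · exact gammaPDF_of_neg hy
        · rfl)]
    have himg : (fun t : ℝ => t/(4*x)) '' Ioi 0 = Ioi 0 := by
      ext y; simp only [mem_image, mem_Ioi]; constructor
      · rintro ⟨u, hu, rfl⟩; positivity
      · intro hy
        refine ⟨y*(4*x), by positivity, ?_⟩
        field_simp
    have hderiv : ∀ u ∈ Ioi (0:ℝ), HasDerivWithinAt (fun t : ℝ => t/(4*x)) (1/(4*x))
        (Ioi (0:ℝ)) u := by
      intro u hu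
      simpa using ((hasDerivAt_id u).div_const (4*x)).hasDerivWithinAt
    have hinj : Set.InjOn (fun t : ℝ => t/(4*x)) (Ioi (0:ℝ)) := fun u hu v hv huv => by
      have h4x : (4:ℝ)*x ≠ 0 := by positivity
      field_simp at huv
      exact huv
    conv_lhs => rw [← himg, my_lintegral_image measurableSet_Ioi hderiv hinj]
    refine setLIntegral_congr_fun measurableSet_Ioi (fun t ht => ?_)
    have ht0 : (0:ℝ) < t := mem_Ioi.mp ht
    have hmemiff : t/(4*x) ∈ (fun y : ℝ => 4*x*y) ⁻¹' s ↔ t ∈ s := by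
      simp only [mem_preimage]
      rw [show 4*x*(t/(4*x)) = t by field_simp]
    rw [abs_of_pos (by positivity : (0:ℝ) < 1/(4*x))]
    by_cases hmem : t ∈ s
    · rw [indicator_of_mem (hmemiff.mpr hmem), indicator_of_mem hmem, one_mul]
    · rw [indicator_of_notMem (fun h => hmem (hmemiff.mp h)), indicator_of_notMem hmem]
      simp
  rw [setLIntegral_congr_fun measurableSet_Ioi hinner]
  have hswap : ∫⁻ x in Ioi (0:ℝ), gammaPDF ((k:ℝ)/2) (1/2) x *
      ∫⁻ t in Ioi (0:ℝ), s.indicator (fun _ => (1:ℝ≥0∞)) t *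
        (ENNReal.ofReal (1/(4*x)) * gammaPDF (((k:ℝ)+1)/2) (1/2) (t/(4*x)))
      = ∫⁻ t in Ioi (0:ℝ), ∫⁻ x in Ioi (0:ℝ), gammaPDF ((k:ℝ)/2) (1/2) x *
          (s.indicator (fun _ => (1:ℝ≥0∞)) t *
            (ENNReal.ofReal (1/(4*x)) * gammaPDF (((k:ℝ)+1)/2) (1/2) (t/(4*x)))) := by
    have heq : ∀ x ∈ Ioi (0:ℝ), gammaPDF ((k:ℝ)/2) (1/2) x *
        (∫⁻ t in Ioi (0:ℝ), s.indicator (fun _ => (1:ℝ≥0∞)) t *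
          (ENNReal.ofReal (1/(4*x)) * gammaPDF (((k:ℝ)+1)/2) (1/2) (t/(4*x))))
        = ∫⁻ t in Ioi (0:ℝ), gammaPDF ((k:ℝ)/2) (1/2) x *
            (s.indicator (fun _ => (1:ℝ≥0∞)) t *
              (ENNReal.ofReal (1/(4*x)) * gammaPDF (((k:ℝ)+1)/2) (1/2) (t/(4*x)))) := by
      intro x hx
      have hmeas : Measurable fun t : ℝ => s.indicator (fun _ => (1:ℝ≥0∞)) t *
          (ENNReal.ofReal (1/(4*x)) * gammaPDF (((k:ℝ)+1)/2) (1/2) (t/(4*x))) := by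
        exact (measurable_const.indicator hs).mul (measurable_const.mul
          ((measurable_gammaPDF' (((k:ℝ)+1)/2) (1/2)).comp (measurable_id.div_const (4*x))))
      rw [← lintegral_const_mul _ hmeas]
    rw [setLIntegral_congr_fun measurableSet_Ioi heq]
    refine lintegral_lintegral_swap ?_
    have h1 := measurable_gammaPDF' ((k:ℝ)/2) (1/2)
    have h2 := measurable_gammaPDF' (((k:ℝ)+1)/2) (1/2)
    apply Measurable.aemeasurable
    apply Measurable.mul
    · exact h1.comp measurable_fst
    · apply Measurable.mul
      · exact ((measurable_const.indicator hs).comp measurable_snd)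
      · apply Measurable.mul (f := fun a : ℝ × ℝ => ENNReal.ofReal (1 / (4 * a.1)))
          (g := fun a : ℝ × ℝ => gammaPDF (((k:ℝ)+1)/2) (1/2) (a.2 / (4 * a.1)))
        · exact (measurable_const.div (measurable_fst.const_mul 4)).ennreal_ofReal
        · exact h2.comp (measurable_snd.div (measurable_fst.const_mul 4))
  rw [hswap]
  refine setLIntegral_congr_fun measurableSet_Ioi (fun t ht => ?_)
  have ht0 : (0:ℝ) < t := mem_Ioi.mp ht
  have hrearr : ∀ x ∈ Ioi (0:ℝ), gammaPDF ((k:ℝ)/2) (1/2) x *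
      (s.indicator (fun _ => (1:ℝ≥0∞)) t *
        (ENNReal.ofReal (1/(4*x)) * gammaPDF (((k:ℝ)+1)/2) (1/2) (t/(4*x))))
      = s.indicator (fun _ => (1:ℝ≥0∞)) t * (gammaPDF ((k:ℝ)/2) (1/2) x *
          (ENNReal.ofReal (1/(4*x)) * gammaPDF (((k:ℝ)+1)/2) (1/2) (t/(4*x)))) := by
    intro x hx
    ring
  rw [setLIntegral_congr_fun measurableSet_Ioi hrearr]
  rw [lintegral_const_mul _ (by
    have h1 := measurable_gammaPDF' ((k:ℝ)/2) (1/2)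
    have h2 := measurable_gammaPDF' (((k:ℝ)+1)/2) (1/2)
    fun_prop)]
  rw [density_eq hk ht0]

end Helpers

theorem stmt_14 {Ω : Type*} [MeasurableSpace Ω] (μ : Measure Ω) [IsProbabilityMeasure μ]
    (k : ℕ) (hk : 1 ≤ k)
    (X Y W : Ω → ℝ) (hX : Measurable X) (hY : Measurable Y) (hW : Measurable W)
    (hXd : Measure.map X μ = gammaMeasure ((k : ℝ) / 2) (1 / 2))
    (hYd : Measure.map Y μ = gammaMeasure (((k : ℝ) + 1) / 2) (1 / 2))
    (hWd : Measure.map W μ = gammaMeasure (k : ℝ) (1 / 2))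
    (hind : IndepFun X Y μ) :
    Measure.map (fun ω => 4 * X ω * Y ω) μ = Measure.map (fun ω => W ω ^ 2) μ := by
  have hm : Measurable (fun p : ℝ × ℝ => 4 * p.1 * p.2) := by fun_prop
  have hRHS : Measure.map (fun ω => W ω ^ 2) μ
      = Measure.map (fun x : ℝ => x ^ 2) (gammaMeasure (k:ℝ) (1/2)) := by
    rw [← hWd, Measure.map_map (by fun_prop) hW]
    rfl
  have hprod : Measure.map (fun ω => (X ω, Y ω)) μ
      = (gammaMeasure ((k:ℝ)/2) (1/2)).prod (gammaMeasure (((k:ℝ)+1)/2) (1/2)) := by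
    rw [← hXd, ← hYd]
    exact (ProbabilityTheory.indepFun_iff_map_prod_eq_prod_map_map hX.aemeasurable
      hY.aemeasurable).mp hind
  have hLHS : Measure.map (fun ω => 4 * X ω * Y ω) μ
      = Measure.map (fun p : ℝ × ℝ => 4 * p.1 * p.2)
          ((gammaMeasure ((k:ℝ)/2) (1/2)).prod (gammaMeasure (((k:ℝ)+1)/2) (1/2))) := by
    rw [← hprod, Measure.map_map hm (hX.prodMk hY)]
    rfl
  rw [hLHS, hRHS]
  refine Measure.ext fun s hs => ?_
  rw [map_mul_apply k hk hs, map_sq_apply k hk hs]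
end
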